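/- Let φ be a straightforward signaling scheme with φ(∅|0) = 1, and for i,k ∈ {1,…,N} define p_{ik} = Σ_{S⊆{1,…,N}: i∈S, |S|=k} φ(S|1). Then for each agent i ∈ {1,…,N}, the stay constraint Σ_{θ∈{0,1}} μ(θ) Σ_{S: i∉S} φ(S|θ)·(θ·F(|S|+1) − r(i)) ≤ 0 holds if and only if Σ_{k=1}^{N−1} ((1/k)·Σ_{j=1}^N p_{jk} − p_{ik})·(F(k+1) − r(i)) + (1 − Σ_{k=1}^N (1/k)·Σ_{j=1}^N p_{jk})·(F(1) − r(i)) ≤ (μ(0)/μ(1))·r(i). -/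
import Mathlib


open Finset

noncomputable section

/-- Welfare `W(θ, S) = θ·|S|·F(|S|) − Σ_{i∈S} r(i)`. -/
def W (F r : ℕ → ℝ) (θ : ℕ) (S : Finset ℕ) : ℝ :=
  (θ : ℝ) * S.card * F S.card - ∑ i ∈ S, r i

/-- A straightforward signaling scheme: for each θ ∈ {0,1}, `φ θ` is a probability
distribution over the subsets of the agent set `{1,…,N}`. -/
def IsScheme (N : ℕ) (φ : ℕ → Finset ℕ → ℝ) : Prop :=
  (∀ θ ∈ ({0, 1} : Finset ℕ), ∀ S ∈ (Icc 1 N).powerset, 0 ≤ φ θ S) ∧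
  (∀ θ ∈ ({0, 1} : Finset ℕ), ∑ S ∈ (Icc 1 N).powerset, φ θ S = 1)

/-- Expected welfare with prior μ(1) = μ1, μ(0) = 1 − μ1. -/
def EW (N : ℕ) (F r : ℕ → ℝ) (μ1 : ℝ) (φ : ℕ → Finset ℕ → ℝ) : ℝ :=
  (1 - μ1) * ∑ S ∈ (Icc 1 N).powerset, φ 0 S * W F r 0 S +
  μ1 * ∑ S ∈ (Icc 1 N).powerset, φ 1 S * W F r 1 S

/-- `p_{ik}`: probability, conditional on θ = 1, that `k` agents are recommended to
move and agent `i` is among them. -/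
def pOf (N : ℕ) (φ : ℕ → Finset ℕ → ℝ) (i k : ℕ) : ℝ :=
  ∑ S ∈ (Icc 1 N).powerset.filter (fun S => i ∈ S ∧ S.card = k), φ 1 S

/-- reformulation of the stay constraint in terms of the marginals. -/
theorem stmt3 (N : ℕ) (hN : 1 ≤ N) (F r : ℕ → ℝ)
    (hFnn : ∀ n, n ≤ N → 0 ≤ F n) (hF01 : F 0 = F 1)
    (hFmono : ∀ n, n + 1 ≤ N → F (n + 1) ≤ F n)
    (hr0 : r 0 = 0) (hrnn : ∀ i, i ≤ N → 0 ≤ r i)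
    (hrmono : ∀ i, i + 1 ≤ N → r i ≤ r (i + 1))
    (μ1 : ℝ) (hμ0 : 0 < μ1) (hμ1 : μ1 < 1)
    (φ : ℕ → Finset ℕ → ℝ) (hsch : IsScheme N φ) (h0 : φ 0 ∅ = 1)
    (i : ℕ) (hi : i ∈ Icc 1 N) :
    ((1 - μ1) * ∑ S ∈ (Icc 1 N).powerset.filter (fun S => i ∉ S),
        φ 0 S * ((0 : ℝ) * F (S.card + 1) - r i) +
      μ1 * ∑ S ∈ (Icc 1 N).powerset.filter (fun S => i ∉ S),
        φ 1 S * ((1 : ℝ) * F (S.card + 1) - r i) ≤ 0) ↔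
      (∑ k ∈ Icc 1 (N - 1),
          ((1 / (k : ℝ)) * (∑ j ∈ Icc 1 N, pOf N φ j k) - pOf N φ i k) *
            (F (k + 1) - r i) +
        (1 - ∑ k ∈ Icc 1 N, (1 / (k : ℝ)) * ∑ j ∈ Icc 1 N, pOf N φ j k) *
          (F 1 - r i)
        ≤ ((1 - μ1) / μ1) * r i) := by
  obtain ⟨hpos, hsum⟩ := hsch
  have h0mem : (0:ℕ) ∈ ({0,1}:Finset ℕ) := by simp
  have h1mem : (1:ℕ) ∈ ({0,1}:Finset ℕ) := by simp
  have hempP : (∅ : Finset ℕ) ∈ (Icc 1 N).powerset := by simp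
  have hcardA : (Icc 1 N).card = N := by rw [Nat.card_Icc]; omega
  -- φ 0 vanishes off ∅
  have hφ0 : ∀ S ∈ (Icc 1 N).powerset, S ≠ ∅ → φ 0 S = 0 := by
    intro S hS hne
    have hsum0 := hsum 0 h0mem
    have hsplit := Finset.add_sum_erase (Icc 1 N).powerset (φ 0) hempP
    have herase : ∑ T ∈ (Icc 1 N).powerset.erase ∅, φ 0 T = 0 := by
      rw [h0] at hsplit; linarith
    have hz := (Finset.sum_eq_zero_iff_of_nonneg ?_).mp herase
    · exact hz S (Finset.mem_erase.mpr ⟨hne, hS⟩)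
    · intro T hT
      exact hpos 0 h0mem T (Finset.mem_of_mem_erase hT)
  -- first sum equals -(r i)
  have hS0 : ∑ S ∈ (Icc 1 N).powerset.filter (fun S => i ∉ S),
      φ 0 S * ((0:ℝ) * F (S.card + 1) - r i) = -(r i) := by
    rw [Finset.sum_eq_single_of_mem (∅ : Finset ℕ) (by simp)]
    · simp [h0]
    · intro S hS hne
      rw [hφ0 S (Finset.mem_of_mem_filter S hS) hne]; ring
  -- q k
  set q : ℕ → ℝ := fun k => ∑ S ∈ (Icc 1 N).powerset.filter (fun S => S.card = k), φ 1 S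
    with hqdef
  have hmaps : ∀ S ∈ (Icc 1 N).powerset, S.card ∈ Icc 0 N := by
    intro S hS
    simp only [Finset.mem_Icc]
    exact ⟨Nat.zero_le _, hcardA ▸ Finset.card_le_card (Finset.mem_powerset.mp hS)⟩
  have hmarg' : ∀ k, ∑ j ∈ Icc 1 N, pOf N φ j k = (k:ℝ) * q k := by
    intro k
    have step : ∀ j, pOf N φ j k =
        ∑ S ∈ (Icc 1 N).powerset.filter (fun S => S.card = k),
          if j ∈ S then φ 1 S else 0 := by
      intro j
      rw [pOf, Finset.sum_filter, Finset.sum_filter]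
      refine Finset.sum_congr rfl fun S _ => ?_
      by_cases h1 : j ∈ S <;> by_cases h2 : S.card = k <;> simp [h1, h2]
    simp_rw [step]
    rw [Finset.sum_comm, hqdef, Finset.mul_sum]
    refine Finset.sum_congr rfl fun S hS => ?_
    have hsub : S ⊆ Icc 1 N := Finset.mem_powerset.mp (Finset.mem_of_mem_filter S hS)
    have hcard : S.card = k := (Finset.mem_filter.mp hS).2
    rw [Finset.sum_ite_mem, Finset.inter_eq_right.mpr hsub, Finset.sum_const,
      nsmul_eq_mul, hcard]
  have hmarg : ∀ k : ℕ, 1 ≤ k → (1/(k:ℝ)) * ∑ j ∈ Icc 1 N, pOf N φ j k = q k := by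
    intro k hk
    have hk0 : (k:ℝ) ≠ 0 := by positivity
    rw [hmarg']; field_simp
  have hq0 : q 0 = φ 1 ∅ := by
    have hfe : (Icc 1 N).powerset.filter (fun S => S.card = 0) = {∅} := by
      ext S
      simp only [Finset.mem_filter, Finset.mem_powerset, Finset.card_eq_zero,
        Finset.mem_singleton]
      constructor
      · rintro ⟨-, h⟩; exact h
      · rintro rfl; simp
    simp only [hqdef]
    rw [hfe, Finset.sum_singleton]
  have hqsum : ∑ k ∈ Icc 0 N, q k = 1 := by
    rw [← hsum 1 h1mem]
    exact Finset.sum_fiberwise_of_maps_to hmaps _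
  -- q' k = q k - pOf i k
  have hq' : ∀ k, (∑ S ∈ (Icc 1 N).powerset.filter (fun S => i ∉ S ∧ S.card = k), φ 1 S)
      = q k - pOf N φ i k := by
    intro k
    have hsplit := Finset.sum_filter_add_sum_filter_not
      ((Icc 1 N).powerset.filter (fun S => S.card = k)) (fun S => i ∈ S) (φ 1)
    have e1 : ((Icc 1 N).powerset.filter (fun S => S.card = k)).filter (fun S => i ∈ S)
        = (Icc 1 N).powerset.filter (fun S => i ∈ S ∧ S.card = k) := by
      ext S; simp only [Finset.mem_filter]; tauto
    have e2 : ((Icc 1 N).powerset.filter (fun S => S.card = k)).filter (fun S => ¬ i ∈ S)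
        = (Icc 1 N).powerset.filter (fun S => i ∉ S ∧ S.card = k) := by
      ext S; simp only [Finset.mem_filter]; tauto
    rw [e1, e2] at hsplit
    rw [pOf, hqdef]
    linarith [hsplit]
  have hq'0 : (∑ S ∈ (Icc 1 N).powerset.filter (fun S => i ∉ S ∧ S.card = 0), φ 1 S)
      = φ 1 ∅ := by
    have hfe : (Icc 1 N).powerset.filter (fun S => i ∉ S ∧ S.card = 0) = {∅} := by
      ext S
      simp only [Finset.mem_filter, Finset.mem_powerset, Finset.card_eq_zero,
        Finset.mem_singleton]
      constructor
      · rintro ⟨-, -, h⟩; exact h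
      · rintro rfl; simp
    rw [hfe, Finset.sum_singleton]
  have hq'N : (∑ S ∈ (Icc 1 N).powerset.filter (fun S => i ∉ S ∧ S.card = N), φ 1 S)
      = 0 := by
    have hfe : (Icc 1 N).powerset.filter (fun S => i ∉ S ∧ S.card = N) = ∅ := by
      rw [Finset.filter_eq_empty_iff]
      rintro S hS ⟨hni, hcard⟩
      have hsub := Finset.mem_powerset.mp hS
      have : S = Icc 1 N := Finset.eq_of_subset_of_card_le hsub (by rw [hcard, hcardA])
      exact hni (this ▸ hi)
    rw [hfe, Finset.sum_empty]
  -- decomposition of E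
  have hE : ∑ S ∈ (Icc 1 N).powerset.filter (fun S => i ∉ S),
      φ 1 S * ((1:ℝ) * F (S.card + 1) - r i)
      = ∑ k ∈ Icc 0 N,
          (∑ S ∈ (Icc 1 N).powerset.filter (fun S => i ∉ S ∧ S.card = k), φ 1 S) *
            (F (k+1) - r i) := by
    have hmaps' : ∀ S ∈ (Icc 1 N).powerset.filter (fun S => i ∉ S), S.card ∈ Icc 0 N :=
      fun S hS => hmaps S (Finset.mem_of_mem_filter S hS)
    rw [← Finset.sum_fiberwise_of_maps_to hmaps'
      (fun S => φ 1 S * ((1:ℝ) * F (S.card + 1) - r i))]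
    refine Finset.sum_congr rfl fun k _ => ?_
    rw [Finset.sum_mul, Finset.filter_filter]
    refine Finset.sum_congr rfl fun S hS => ?_
    have : S.card = k := (Finset.mem_filter.mp hS).2.2
    rw [this]; ring
  -- split Icc 0 N
  have hNmem : N ∉ Icc 1 (N-1) := by simp only [Finset.mem_Icc]; omega
  have h0mem' : (0:ℕ) ∉ insert N (Icc 1 (N-1)) := by
    simp only [Finset.mem_insert, Finset.mem_Icc]; omega
  have hIcc : Icc 0 N = insert 0 (insert N (Icc 1 (N-1))) := by
    ext k; simp only [Finset.mem_Icc, Finset.mem_insert]; omega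
  have h0Icc : Icc 0 N = insert 0 (Icc 1 N) := by
    ext k; simp only [Finset.mem_Icc, Finset.mem_insert]; omega
  have h0notIcc : (0:ℕ) ∉ Icc 1 N := by simp
  -- E evaluated
  have hEval : ∑ S ∈ (Icc 1 N).powerset.filter (fun S => i ∉ S),
      φ 1 S * ((1:ℝ) * F (S.card + 1) - r i)
      = φ 1 ∅ * (F 1 - r i) +
        ∑ k ∈ Icc 1 (N-1), (q k - pOf N φ i k) * (F (k+1) - r i) := by
    rw [hE, hIcc, Finset.sum_insert h0mem', Finset.sum_insert hNmem, hq'N, hq'0]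
    rw [show (0:ℕ)+1 = 1 from rfl]
    have : ∀ k ∈ Icc 1 (N-1),
        (∑ S ∈ (Icc 1 N).powerset.filter (fun S => i ∉ S ∧ S.card = k), φ 1 S) *
          (F (k+1) - r i) = (q k - pOf N φ i k) * (F (k+1) - r i) := by
      intro k _; rw [hq' k]
    rw [Finset.sum_congr rfl this]; ring
  -- RHS rewriting
  have hR1 : ∑ k ∈ Icc 1 (N-1),
      ((1 / (k : ℝ)) * (∑ j ∈ Icc 1 N, pOf N φ j k) - pOf N φ i k) * (F (k + 1) - r i)
      = ∑ k ∈ Icc 1 (N-1), (q k - pOf N φ i k) * (F (k+1) - r i) := by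
    refine Finset.sum_congr rfl fun k hk => ?_
    have hk1 : 1 ≤ k := (Finset.mem_Icc.mp hk).1
    rw [hmarg k hk1]
  have hR2 : ∑ k ∈ Icc 1 N, (1 / (k : ℝ)) * ∑ j ∈ Icc 1 N, pOf N φ j k
      = 1 - φ 1 ∅ := by
    have : ∑ k ∈ Icc 1 N, (1 / (k : ℝ)) * ∑ j ∈ Icc 1 N, pOf N φ j k
        = ∑ k ∈ Icc 1 N, q k := by
      refine Finset.sum_congr rfl fun k hk => hmarg k (Finset.mem_Icc.mp hk).1
    rw [this]
    have := hqsum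
    rw [h0Icc, Finset.sum_insert h0notIcc, hq0] at this
    linarith
  rw [hS0, hEval, hR1, hR2]
  have key : ∀ E : ℝ, ((1 - μ1) * -(r i) + μ1 * E ≤ 0 ↔ E ≤ ((1 - μ1) / μ1) * r i) := by
    intro E
    rw [div_mul_eq_mul_div, le_div_iff₀ hμ0]
    constructor <;> intro h <;> nlinarith
  have := key (φ 1 ∅ * (F 1 - r i) + ∑ k ∈ Icc 1 (N-1), (q k - pOf N φ i k) * (F (k+1) - r i))
  constructor <;> intro h
  · have h2 := this.mp h
    linarith [h2]
  · exact this.mpr (by linarith [h])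

end
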